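/- Let (X,φ) and (Y,ψ) be Smale spaces that are asymptotically continuous orbit equivalent via a homeomorphism h : X → Y with cocycle data (c₁, c₂, d₁, d₂). Then: (i) if x ∈ X is an asymptotic p-periodic point (p ∈ ℤ, p ≠ 0), then (ψ^{c_h^p(x)}(h(x)), h(x)) ∈ G_ψ^a, where c_h^p(x) := c₁^p(x) + d₁(φ^p(x), x); in particular, if c_h^p(x) ≠ 0, then h(x) is an asymptotic c_h^p(x)-periodic point of (Y,ψ); (ii) if x is a p-periodic point (φ^p(x) = x), then d₁(φ^p(x),x) = 0 and (ψ^{c₁^p(x)}(h(x)), h(x)) ∈ G_ψ^a. -/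

import Mathlib

open Filter Set Topology

noncomputable section

/-- Integer iterate of a homeomorphism. -/
def hIter {X : Type*} [TopologicalSpace X] (φ : X ≃ₜ X) (n : ℤ) (x : X) : X :=
  ((φ.toEquiv : Equiv.Perm X) ^ n) x

/-- The cocycle sums `f^n` of a function `f : X → ℤ` along the iterates of `φ`:
`f^n(x) = Σ_{i=0}^{n-1} f(φ^i(x))` for `n > 0`, `f^0 = 0`, and
`f^n(x) = −Σ_{i=n}^{-1} f(φ^i(x))` for `n < 0`. -/
def cSum {X : Type*} [TopologicalSpace X] (φ : X ≃ₜ X) (f : X → ℤ) (n : ℤ) (x : X) : ℤ :=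
  if 0 ≤ n then ∑ i ∈ Finset.range n.toNat, f (hIter φ i x)
  else -∑ i ∈ Finset.range (-n).toNat, f (hIter φ (n + i) x)

/-- Stable asymptotic pairs (limit definition). -/
def asympS {X : Type*} [MetricSpace X] (φ : X ≃ₜ X) : Set (X × X) :=
  {p | Tendsto (fun n : ℕ => dist (hIter φ n p.1) (hIter φ n p.2)) atTop (nhds 0)}

/-- Unstable asymptotic pairs (limit definition). -/
def asympU {X : Type*} [MetricSpace X] (φ : X ≃ₜ X) : Set (X × X) :=
  {p | Tendsto (fun n : ℕ => dist (hIter φ (-(n : ℤ)) p.1) (hIter φ (-(n : ℤ)) p.2))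
    atTop (nhds 0)}

/-- Asymptotic pairs (limit definition). -/
def asympA {X : Type*} [MetricSpace X] (φ : X ≃ₜ X) : Set (X × X) := asympS φ ∩ asympU φ

/-- The `ω`-limit set of `x`. -/
def omegaSet {X : Type*} [MetricSpace X] (φ : X ≃ₜ X) (x : X) : Set X :=
  {z | ∃ n : ℕ → ℕ, StrictMono n ∧ Tendsto (fun i => hIter φ (n i) x) atTop (nhds z)}

/-- The `α`-limit set of `x`. -/
def alphaSet {X : Type*} [MetricSpace X] (φ : X ≃ₜ X) (x : X) : Set X :=
  {z | ∃ n : ℕ → ℤ, StrictAnti n ∧ Tendsto (fun i => hIter φ (n i) x) atTop (nhds z)}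

/-- A Smale space structure on a compact metric space `X`. -/
structure SmaleSpace (X : Type*) [MetricSpace X] [CompactSpace X] where
  phi : X ≃ₜ X
  eps : ℝ
  lam : ℝ
  br : X → X → X
  eps_pos : 0 < eps
  lam_pos : 0 < lam
  lam_lt_one : lam < 1
  br_cont : ContinuousOn (fun p : X × X => br p.1 p.2) {p : X × X | dist p.1 p.2 < eps}
  br_self : ∀ x : X, br x x = x
  br_assoc_left : ∀ x y z : X, dist x y < eps → dist (br x y) z < eps → dist x z < eps →
    br (br x y) z = br x z
  br_assoc_right : ∀ x y z : X, dist y z < eps → dist x (br y z) < eps → dist x z < eps →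
    br x (br y z) = br x z
  phi_br : ∀ x y : X, dist x y < eps → dist (phi x) (phi y) < eps →
    phi (br x y) = br (phi x) (phi y)
  contract_s : ∀ x y z : X, br y x = y → dist x y < eps → br z x = z → dist x z < eps →
    dist (phi y) (phi z) ≤ lam * dist y z
  contract_u : ∀ x y z : X, br x y = y → dist x y < eps → br x z = z → dist x z < eps →
    dist (phi.symm y) (phi.symm z) ≤ lam * dist y z

namespace SmaleSpace

variable {X Y : Type*} [MetricSpace X] [CompactSpace X] [MetricSpace Y] [CompactSpace Y]

/-- Local stable set `X^s(x,ε)`. -/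
def Xs (S : SmaleSpace X) (x : X) (ε : ℝ) : Set X := {y | S.br y x = y ∧ dist x y < ε}

/-- Local unstable set `X^u(x,ε)`. -/
def Xu (S : SmaleSpace X) (x : X) (ε : ℝ) : Set X := {y | S.br x y = y ∧ dist x y < ε}

def Gs0 (S : SmaleSpace X) : Set (X × X) := {p | p.2 ∈ S.Xs p.1 S.eps}

def Gu0 (S : SmaleSpace X) : Set (X × X) := {p | p.2 ∈ S.Xu p.1 S.eps}

/-- `G_φ^{s,n} = (φ×φ)^{-n}(G_φ^{s,0})`. -/
def GsN (S : SmaleSpace X) (n : ℤ) : Set (X × X) :=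
  {p | (hIter S.phi n p.1, hIter S.phi n p.2) ∈ S.Gs0}

/-- `G_φ^{u,n} = (φ×φ)^{n}(G_φ^{u,0})`. -/
def GuN (S : SmaleSpace X) (n : ℤ) : Set (X × X) :=
  {p | (hIter S.phi (-n) p.1, hIter S.phi (-n) p.2) ∈ S.Gu0}

def GaN (S : SmaleSpace X) (n : ℤ) : Set (X × X) := S.GsN n ∩ S.GuN n

/-- The asymptotic equivalence relation `G_φ^a = ⋃_{n ≥ 0} G_φ^{a,n}`. -/
def Ga (S : SmaleSpace X) : Set (X × X) := ⋃ n : ℕ, S.GaN n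

lemma gaN_subset_ga (S : SmaleSpace X) (n : ℕ) : S.GaN n ⊆ S.Ga :=
  Set.subset_iUnion (fun k : ℕ => S.GaN k) n

/-- The inductive limit topology on `G_φ^a`: a set is open iff its intersection with each
`G_φ^{a,n}` is open in the subspace topology from `X × X`. -/
def gaTopology (S : SmaleSpace X) : TopologicalSpace ↥S.Ga :=
  ⨆ n : ℕ, TopologicalSpace.coinduced (Set.inclusion (S.gaN_subset_ga n)) inferInstance

/-- Irreducibility of a Smale space. -/
def Irreducible (S : SmaleSpace X) : Prop :=
  ∀ U V : Set X, IsOpen U → U.Nonempty → IsOpen V → V.Nonempty →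
    ∃ K : ℕ, ((hIter S.phi K '' U) ∩ V).Nonempty

def IsPeriodicPoint (S : SmaleSpace X) (x : X) : Prop :=
  ∃ p : ℕ, 0 < p ∧ hIter S.phi p x = x

/-- `h` is a flip conjugacy between `(X,φ)` and `(Y,ψ)`. -/
def IsFlipConjugacy (S : SmaleSpace X) (T : SmaleSpace Y) (h : X ≃ₜ Y) : Prop :=
  (∀ x, h (S.phi x) = T.phi (h x)) ∨ (∀ x, h (S.phi x) = T.phi.symm (h x))

def FlipConjugate (S : SmaleSpace X) (T : SmaleSpace Y) : Prop :=
  ∃ h : X ≃ₜ Y, IsFlipConjugacy S T h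

/-- An isomorphism of the principal étale groupoids `G_φ^a` and `G_ψ^a`:
a bijection which is a homeomorphism for the inductive limit topologies and preserves
the (equivalence relation) groupoid structure. -/
structure GaIso (S : SmaleSpace X) (T : SmaleSpace Y) where
  toEquiv : ↥S.Ga ≃ ↥T.Ga
  cont : @Continuous _ _ S.gaTopology T.gaTopology toEquiv
  cont_symm : @Continuous _ _ T.gaTopology S.gaTopology toEquiv.symm
  map_mul : ∀ p q r : ↥S.Ga, (p : X × X).2 = (q : X × X).1 →
    (r : X × X) = ((p : X × X).1, (q : X × X).2) →
    (toEquiv p : Y × Y).2 = (toEquiv q : Y × Y).1 ∧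
      (toEquiv r : Y × Y) = ((toEquiv p : Y × Y).1, (toEquiv q : Y × Y).2)

end SmaleSpace

namespace SmaleSpace

variable {X Y : Type*} [MetricSpace X] [CompactSpace X] [MetricSpace Y] [CompactSpace Y]

/-- The data of an asymptotic continuous orbit equivalence between two Smale spaces
`(X,φ)` and `(Y,ψ)`: a homeomorphism `h : X → Y`, continuous functions `c₁ : X → ℤ`,
`c₂ : Y → ℤ` and continuous two-cocycle functions `d₁ : G_φ^a → ℤ`, `d₂ : G_ψ^a → ℤ`
satisfying conditions (1), (2) and (i)–(viii) of the definition of asymptotic continuous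
orbit equivalence. -/
structure ACOEData (S : SmaleSpace X) (T : SmaleSpace Y) where
  h : X ≃ₜ Y
  c₁ : X → ℤ
  c₂ : Y → ℤ
  d₁ : X → X → ℤ
  d₂ : Y → Y → ℤ
  c₁_cont : Continuous c₁
  c₂_cont : Continuous c₂
  d₁_cocycle : ∀ x z w : X, (x, z) ∈ S.Ga → (z, w) ∈ S.Ga → d₁ x z + d₁ z w = d₁ x w
  d₂_cocycle : ∀ y w v : Y, (y, w) ∈ T.Ga → (w, v) ∈ T.Ga → d₂ y w + d₂ w v = d₂ y v
  d₁_cont : @Continuous ↥S.Ga ℤ S.gaTopology _ fun p => d₁ (p : X × X).1 (p : X × X).2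
  d₂_cont : @Continuous ↥T.Ga ℤ T.gaTopology _ fun p => d₂ (p : Y × Y).1 (p : Y × Y).2
  cocycle_eq₁ : ∀ (m : ℤ) (x z : X), (x, z) ∈ S.Ga →
    cSum S.phi c₁ m x + d₁ (hIter S.phi m x) (hIter S.phi m z)
      = cSum S.phi c₁ m z + d₁ x z
  cocycle_eq₂ : ∀ (m : ℤ) (y w : Y), (y, w) ∈ T.Ga →
    cSum T.phi c₂ m y + d₂ (hIter T.phi m y) (hIter T.phi m w)
      = cSum T.phi c₂ m w + d₂ y w
  xi₁_mem : ∀ (n : ℤ) (x : X),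
    (hIter T.phi (cSum S.phi c₁ n x) (h x), h (hIter S.phi n x)) ∈ T.Ga
  xi₁_cont : ∀ n : ℤ, @Continuous X ↥T.Ga _ T.gaTopology
    fun x => ⟨(hIter T.phi (cSum S.phi c₁ n x) (h x), h (hIter S.phi n x)), xi₁_mem n x⟩
  xi₂_mem : ∀ (n : ℤ) (y : Y),
    (hIter S.phi (cSum T.phi c₂ n y) (h.symm y), h.symm (hIter T.phi n y)) ∈ S.Ga
  xi₂_cont : ∀ n : ℤ, @Continuous Y ↥S.Ga _ S.gaTopology
    fun y => ⟨(hIter S.phi (cSum T.phi c₂ n y) (h.symm y), h.symm (hIter T.phi n y)),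
      xi₂_mem n y⟩
  eta₁_mem : ∀ x z : X, (x, z) ∈ S.Ga → (hIter T.phi (d₁ x z) (h x), h z) ∈ T.Ga
  eta₁_cont : @Continuous ↥S.Ga ↥T.Ga S.gaTopology T.gaTopology
    fun p => ⟨(hIter T.phi (d₁ (p : X × X).1 (p : X × X).2) (h (p : X × X).1),
      h (p : X × X).2), eta₁_mem (p : X × X).1 (p : X × X).2 p.2⟩
  eta₂_mem : ∀ y w : Y, (y, w) ∈ T.Ga → (hIter S.phi (d₂ y w) (h.symm y), h.symm w) ∈ S.Ga
  eta₂_cont : @Continuous ↥T.Ga ↥S.Ga T.gaTopology S.gaTopology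
    fun p => ⟨(hIter S.phi (d₂ (p : Y × Y).1 (p : Y × Y).2) (h.symm (p : Y × Y).1),
      h.symm (p : Y × Y).2), eta₂_mem (p : Y × Y).1 (p : Y × Y).2 p.2⟩
  cond_v : ∀ (n : ℤ) (x : X),
    cSum T.phi c₂ (cSum S.phi c₁ n x) (h x)
      + d₂ (hIter T.phi (cSum S.phi c₁ n x) (h x)) (h (hIter S.phi n x)) = n
  cond_vi : ∀ (n : ℤ) (y : Y),
    cSum S.phi c₁ (cSum T.phi c₂ n y) (h.symm y)
      + d₁ (hIter S.phi (cSum T.phi c₂ n y) (h.symm y)) (h.symm (hIter T.phi n y)) = n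
  cond_vii : ∀ x z : X, (x, z) ∈ S.Ga →
    cSum T.phi c₂ (d₁ x z) (h x) + d₂ (hIter T.phi (d₁ x z) (h x)) (h z) = 0
  cond_viii : ∀ y w : Y, (y, w) ∈ T.Ga →
    cSum S.phi c₁ (d₂ y w) (h.symm y) + d₁ (hIter S.phi (d₂ y w) (h.symm y)) (h.symm w) = 0

/-- Asymptotic continuous orbit equivalence of Smale spaces. -/
def ACOE (S : SmaleSpace X) (T : SmaleSpace Y) : Prop := Nonempty (ACOEData S T)

/-- Asymptotic flip conjugacy: asymptotic continuous orbit equivalence in which the cocycle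
data can be chosen as `c₁ ≡ 1, c₂ ≡ 1, d₁ ≡ 0, d₂ ≡ 0` or as
`c₁ ≡ −1, c₂ ≡ −1, d₁ ≡ 0, d₂ ≡ 0`. -/
def AsymptoticallyFlipConjugate (S : SmaleSpace X) (T : SmaleSpace Y) : Prop :=
  ∃ A : ACOEData S T,
    (A.c₁ = (fun _ => 1) ∧ A.c₂ = (fun _ => 1) ∧
      A.d₁ = (fun _ _ => 0) ∧ A.d₂ = (fun _ _ => 0)) ∨
    (A.c₁ = (fun _ => -1) ∧ A.c₂ = (fun _ => -1) ∧
      A.d₁ = (fun _ _ => 0) ∧ A.d₂ = (fun _ _ => 0))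

end SmaleSpace



section Helpers

lemma hIter_add' {X : Type*} [TopologicalSpace X] (φ : X ≃ₜ X) (m n : ℤ) (x : X) :
    hIter φ (m + n) x = hIter φ m (hIter φ n x) := by
  simp [hIter, zpow_add, Equiv.Perm.mul_apply]

lemma hIter_zero' {X : Type*} [TopologicalSpace X] (φ : X ≃ₜ X) (x : X) :
    hIter φ 0 x = x := by simp [hIter]

lemma hIter_one' {X : Type*} [TopologicalSpace X] (φ : X ≃ₜ X) (x : X) :
    hIter φ 1 x = φ x := by simp [hIter]

lemma hIter_neg_one' {X : Type*} [TopologicalSpace X] (φ : X ≃ₜ X) (x : X) :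
    hIter φ (-1) x = φ.symm x := by
  simp [hIter, zpow_neg_one]

lemma hIter_succ' {X : Type*} [TopologicalSpace X] (φ : X ≃ₜ X) (n : ℤ) (x : X) :
    hIter φ (n + 1) x = φ (hIter φ n x) := by
  have h : n + 1 = 1 + n := by ring
  rw [h, hIter_add', hIter_one']

lemma hIter_pred' {X : Type*} [TopologicalSpace X] (φ : X ≃ₜ X) (n : ℤ) (x : X) :
    hIter φ (n - 1) x = φ.symm (hIter φ n x) := by
  have h : n - 1 = -1 + n := by ring
  rw [h, hIter_add', hIter_neg_one']

namespace SmaleSpace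

variable {X : Type*} [MetricSpace X] [CompactSpace X]

lemma gs0_step' (S : SmaleSpace X) {u v : X} (h : (u, v) ∈ S.Gs0) :
    (S.phi u, S.phi v) ∈ S.Gs0 ∧ dist (S.phi u) (S.phi v) ≤ S.lam * dist u v := by
  obtain ⟨hbr, hd⟩ := h
  have hc : dist (S.phi v) (S.phi u) ≤ S.lam * dist v u :=
    S.contract_s u v u hbr hd (S.br_self u) (by simpa using S.eps_pos)
  have hc' : dist (S.phi u) (S.phi v) ≤ S.lam * dist u v := by
    rw [dist_comm, dist_comm u v]; exact hc
  have hlt : dist (S.phi u) (S.phi v) < S.eps := by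
    have h0 : (0:ℝ) ≤ dist u v := dist_nonneg
    nlinarith [S.lam_pos, S.lam_lt_one, S.eps_pos]
  have hb : S.phi (S.br v u) = S.br (S.phi v) (S.phi u) :=
    S.phi_br v u (by rwa [dist_comm]) (by rwa [dist_comm])
  refine ⟨⟨?_, hlt⟩, hc'⟩
  rw [← hb, hbr]

lemma gu0_step' (S : SmaleSpace X) {u v : X} (h : (u, v) ∈ S.Gu0) :
    (S.phi.symm u, S.phi.symm v) ∈ S.Gu0 ∧
      dist (S.phi.symm u) (S.phi.symm v) ≤ S.lam * dist u v := by
  obtain ⟨hbr, hd⟩ := h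
  have hc : dist (S.phi.symm v) (S.phi.symm u) ≤ S.lam * dist v u :=
    S.contract_u u v u hbr hd (S.br_self u) (by simpa using S.eps_pos)
  have hc' : dist (S.phi.symm u) (S.phi.symm v) ≤ S.lam * dist u v := by
    rw [dist_comm, dist_comm u v]; exact hc
  have hlt : dist (S.phi.symm u) (S.phi.symm v) < S.eps := by
    have h0 : (0:ℝ) ≤ dist u v := dist_nonneg
    nlinarith [S.lam_pos, S.lam_lt_one, S.eps_pos]
  have hb : S.phi (S.br (S.phi.symm u) (S.phi.symm v))
      = S.br (S.phi (S.phi.symm u)) (S.phi (S.phi.symm v)) :=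
    S.phi_br _ _ hlt (by simpa using hd)
  refine ⟨⟨?_, hlt⟩, hc'⟩
  have hb' : S.phi (S.br (S.phi.symm u) (S.phi.symm v)) = v := by
    rw [hb]; simpa using hbr
  have := congrArg S.phi.symm hb'
  simpa using this

lemma gs0_iter' (S : SmaleSpace X) {u v : X} (h : (u, v) ∈ S.Gs0) (k : ℕ) :
    (hIter S.phi k u, hIter S.phi k v) ∈ S.Gs0 ∧
      dist (hIter S.phi k u) (hIter S.phi k v) ≤ S.lam ^ k * S.eps := by
  induction k with
  | zero =>
    refine ⟨by simpa [hIter_zero'] using h, ?_⟩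
    simpa [hIter_zero'] using le_of_lt h.2
  | succ k ih =>
    have hstep := S.gs0_step' ih.1
    have e1 : hIter S.phi ((k:ℕ)+1 : ℕ) u = S.phi (hIter S.phi k u) := by
      rw [show (((k:ℕ)+1 : ℕ) : ℤ) = (k:ℤ) + 1 by push_cast; ring, hIter_succ']
    have e2 : hIter S.phi ((k:ℕ)+1 : ℕ) v = S.phi (hIter S.phi k v) := by
      rw [show (((k:ℕ)+1 : ℕ) : ℤ) = (k:ℤ) + 1 by push_cast; ring, hIter_succ']
    refine ⟨by rw [e1, e2]; exact hstep.1, ?_⟩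
    rw [e1, e2]
    calc dist (S.phi (hIter S.phi k u)) (S.phi (hIter S.phi k v))
        ≤ S.lam * dist (hIter S.phi k u) (hIter S.phi k v) := hstep.2
      _ ≤ S.lam * (S.lam ^ k * S.eps) :=
          mul_le_mul_of_nonneg_left ih.2 S.lam_pos.le
      _ = S.lam ^ (k+1) * S.eps := by ring

lemma gu0_iter' (S : SmaleSpace X) {u v : X} (h : (u, v) ∈ S.Gu0) (k : ℕ) :
    (hIter S.phi (-(k:ℤ)) u, hIter S.phi (-(k:ℤ)) v) ∈ S.Gu0 ∧
      dist (hIter S.phi (-(k:ℤ)) u) (hIter S.phi (-(k:ℤ)) v) ≤ S.lam ^ k * S.eps := by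
  induction k with
  | zero =>
    refine ⟨by simpa [hIter_zero'] using h, ?_⟩
    simpa [hIter_zero'] using le_of_lt h.2
  | succ k ih =>
    have hstep := S.gu0_step' ih.1
    have e1 : hIter S.phi (-((k:ℕ)+1 : ℕ) : ℤ) u = S.phi.symm (hIter S.phi (-(k:ℤ)) u) := by
      rw [show (-(((k:ℕ)+1 : ℕ) : ℤ)) = -(k:ℤ) - 1 by push_cast; ring, hIter_pred']
    have e2 : hIter S.phi (-((k:ℕ)+1 : ℕ) : ℤ) v = S.phi.symm (hIter S.phi (-(k:ℤ)) v) := by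
      rw [show (-(((k:ℕ)+1 : ℕ) : ℤ)) = -(k:ℤ) - 1 by push_cast; ring, hIter_pred']
    refine ⟨by rw [e1, e2]; exact hstep.1, ?_⟩
    rw [e1, e2]
    calc dist (S.phi.symm (hIter S.phi (-(k:ℤ)) u)) (S.phi.symm (hIter S.phi (-(k:ℤ)) v))
        ≤ S.lam * dist (hIter S.phi (-(k:ℤ)) u) (hIter S.phi (-(k:ℤ)) v) := hstep.2
      _ ≤ S.lam * (S.lam ^ k * S.eps) :=
          mul_le_mul_of_nonneg_left ih.2 S.lam_pos.le
      _ = S.lam ^ (k+1) * S.eps := by ring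

lemma gsN_step' (S : SmaleSpace X) (n : ℤ) : S.GsN n ⊆ S.GsN (n + 1) := by
  intro p hp
  have := (S.gs0_step' hp).1
  show (hIter S.phi (n+1) p.1, hIter S.phi (n+1) p.2) ∈ S.Gs0
  rw [hIter_succ', hIter_succ']
  exact this

lemma guN_step' (S : SmaleSpace X) (n : ℤ) : S.GuN n ⊆ S.GuN (n + 1) := by
  intro p hp
  have := (S.gu0_step' hp).1
  show (hIter S.phi (-(n+1)) p.1, hIter S.phi (-(n+1)) p.2) ∈ S.Gu0
  rw [show -(n+1) = -n - 1 by ring, hIter_pred', hIter_pred']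
  exact this

lemma gsN_mono' (S : SmaleSpace X) {n m : ℤ} (h : n ≤ m) : S.GsN n ⊆ S.GsN m := by
  obtain ⟨k, rfl⟩ := Int.le.dest h
  clear h
  induction k with
  | zero => simp
  | succ k ih =>
    have : n + ((k:ℕ)+1 : ℕ) = (n + (k:ℤ)) + 1 := by push_cast; ring
    rw [this]
    exact ih.trans (S.gsN_step' _)

lemma guN_mono' (S : SmaleSpace X) {n m : ℤ} (h : n ≤ m) : S.GuN n ⊆ S.GuN m := by
  obtain ⟨k, rfl⟩ := Int.le.dest h
  clear h
  induction k with
  | zero => simp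
  | succ k ih =>
    have : n + ((k:ℕ)+1 : ℕ) = (n + (k:ℤ)) + 1 := by push_cast; ring
    rw [this]
    exact ih.trans (S.guN_step' _)

lemma ga_refl' (S : SmaleSpace X) (x : X) : (x, x) ∈ S.Ga := by
  apply S.gaN_subset_ga 0
  constructor
  · show (hIter S.phi 0 x, hIter S.phi 0 x) ∈ S.Gs0
    rw [hIter_zero']
    exact ⟨S.br_self x, by simpa using S.eps_pos⟩
  · show (hIter S.phi (-(0:ℤ)) x, hIter S.phi (-(0:ℤ)) x) ∈ S.Gu0
    rw [show (-(0:ℤ)) = 0 by ring, hIter_zero']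
    exact ⟨S.br_self x, by simpa using S.eps_pos⟩

lemma ga_shift' (S : SmaleSpace X) (d : ℤ) {y w : X} (h : (y, w) ∈ S.Ga) :
    (hIter S.phi d y, hIter S.phi d w) ∈ S.Ga := by
  obtain ⟨n, hn⟩ := Set.mem_iUnion.mp h
  set M : ℕ := n + d.natAbs with hM
  apply S.gaN_subset_ga M
  constructor
  · have h1 : (y, w) ∈ S.GsN ((M:ℤ) + d) := S.gsN_mono' (by omega) hn.1
    show (hIter S.phi M (hIter S.phi d y), hIter S.phi M (hIter S.phi d w)) ∈ S.Gs0
    rw [← hIter_add', ← hIter_add']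
    exact h1
  · have h2 : (y, w) ∈ S.GuN ((M:ℤ) - d) := S.guN_mono' (by omega) hn.2
    show (hIter S.phi (-(M:ℤ)) (hIter S.phi d y),
        hIter S.phi (-(M:ℤ)) (hIter S.phi d w)) ∈ S.Gu0
    rw [← hIter_add', ← hIter_add', show -(M:ℤ) + d = -((M:ℤ) - d) by ring]
    exact h2

lemma ga_trans' (S : SmaleSpace X) {x z w : X} (h1 : (x, z) ∈ S.Ga)
    (h2 : (z, w) ∈ S.Ga) : (x, w) ∈ S.Ga := by
  obtain ⟨n, hn⟩ := Set.mem_iUnion.mp h1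
  obtain ⟨m, hm⟩ := Set.mem_iUnion.mp h2
  set N : ℕ := max n m with hN
  have hxz : (x, z) ∈ S.GaN N :=
    ⟨S.gsN_mono' (by exact_mod_cast le_max_left n m) hn.1,
     S.guN_mono' (by exact_mod_cast le_max_left n m) hn.2⟩
  have hzw : (z, w) ∈ S.GaN N :=
    ⟨S.gsN_mono' (by exact_mod_cast le_max_right n m) hm.1,
     S.guN_mono' (by exact_mod_cast le_max_right n m) hm.2⟩
  obtain ⟨k, hk⟩ := exists_pow_lt_of_lt_one (by norm_num : (0:ℝ) < 1/2) S.lam_lt_one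
  apply S.gaN_subset_ga (N + k)
  have ecast : ∀ t : X, hIter S.phi (k:ℤ) (hIter S.phi (N:ℤ) t)
      = hIter S.phi ((N+k : ℕ) : ℤ) t := by
    intro t
    rw [← hIter_add']
    congr 1
    push_cast; ring
  have ecast' : ∀ t : X, hIter S.phi (-(k:ℤ)) (hIter S.phi (-(N:ℤ)) t)
      = hIter S.phi (-((N+k : ℕ) : ℤ)) t := by
    intro t
    rw [← hIter_add']
    congr 1
    push_cast; ring
  have hlk : S.lam ^ k * S.eps < S.eps / 2 := by
    have h0 : (0:ℝ) ≤ S.lam ^ k := pow_nonneg S.lam_pos.le k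
    nlinarith [S.eps_pos]
  constructor
  · -- stable part
    have Hab := S.gs0_iter' hxz.1 k
    have Hbc := S.gs0_iter' hzw.1 k
    rw [ecast, ecast] at Hab Hbc
    set a := hIter S.phi ((N+k : ℕ) : ℤ) x
    set b := hIter S.phi ((N+k : ℕ) : ℤ) z
    set c := hIter S.phi ((N+k : ℕ) : ℤ) w
    have dab : dist a b < S.eps / 2 := lt_of_le_of_lt Hab.2 hlk
    have dbc : dist b c < S.eps / 2 := lt_of_le_of_lt Hbc.2 hlk
    have dac : dist a c < S.eps := by
      have := dist_triangle a b c
      linarith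
    have hba : S.br b a = b := Hab.1.1
    have hcb : S.br c b = c := Hbc.1.1
    have hassoc : S.br c (S.br b a) = S.br c a := by
      apply S.br_assoc_right c b a
      · rw [dist_comm]; linarith [dab, S.eps_pos]
      · rw [hba, dist_comm]; linarith [dbc, S.eps_pos]
      · rw [dist_comm]; exact dac
    rw [hba] at hassoc
    show S.br c a = c ∧ dist a c < S.eps
    exact ⟨by rw [← hassoc]; exact hcb, dac⟩
  · -- unstable part
    have Hab := S.gu0_iter' hxz.2 k
    have Hbc := S.gu0_iter' hzw.2 k
    rw [ecast', ecast'] at Hab Hbc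
    set a := hIter S.phi (-((N+k : ℕ) : ℤ)) x
    set b := hIter S.phi (-((N+k : ℕ) : ℤ)) z
    set c := hIter S.phi (-((N+k : ℕ) : ℤ)) w
    have dab : dist a b < S.eps / 2 := lt_of_le_of_lt Hab.2 hlk
    have dbc : dist b c < S.eps / 2 := lt_of_le_of_lt Hbc.2 hlk
    have dac : dist a c < S.eps := by
      have := dist_triangle a b c
      linarith
    have hab : S.br a b = b := Hab.1.1
    have hbc : S.br b c = c := Hbc.1.1
    have hassoc : S.br (S.br a b) c = S.br a c := by
      apply S.br_assoc_left a b c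
      · linarith [dab, S.eps_pos]
      · rw [hab]; linarith [dbc, S.eps_pos]
      · exact dac
    rw [hab] at hassoc
    show S.br a c = c ∧ dist a c < S.eps
    exact ⟨by rw [← hassoc]; exact hbc, dac⟩

end SmaleSpace

end Helpers


/-- Under an asymptotic continuous orbit equivalence with data
`(h, c₁, c₂, d₁, d₂)`: (i) if `x` is an asymptotic `p`-periodic point then
`(ψ^{c_h^p(x)}(h(x)), h(x)) ∈ G_ψ^a` where `c_h^p(x) = c₁^p(x) + d₁(φ^p(x),x)`
(so if `c_h^p(x) ≠ 0` then `h(x)` is an asymptotic `c_h^p(x)`-periodic point);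
(ii) if `x` is `p`-periodic then `d₁(φ^p(x),x) = 0` and
`(ψ^{c₁^p(x)}(h(x)), h(x)) ∈ G_ψ^a`. -/
theorem acoe_asymptotic_periodic {X Y : Type*} [MetricSpace X] [CompactSpace X]
    [MetricSpace Y] [CompactSpace Y] (S : SmaleSpace X) (T : SmaleSpace Y)
    (A : SmaleSpace.ACOEData S T) :
    (∀ (p : ℤ) (x : X), p ≠ 0 → (hIter S.phi p x, x) ∈ S.Ga →
      (hIter T.phi (cSum S.phi A.c₁ p x + A.d₁ (hIter S.phi p x) x) (A.h x),
        A.h x) ∈ T.Ga) ∧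
    (∀ (p : ℤ) (x : X), p ≠ 0 → hIter S.phi p x = x →
      A.d₁ (hIter S.phi p x) x = 0 ∧
      (hIter T.phi (cSum S.phi A.c₁ p x) (A.h x), A.h x) ∈ T.Ga) := by
  
  have main : ∀ (p : ℤ) (x : X), (hIter S.phi p x, x) ∈ S.Ga →
      (hIter T.phi (cSum S.phi A.c₁ p x + A.d₁ (hIter S.phi p x) x) (A.h x),
        A.h x) ∈ T.Ga := by
    intro p x hG
    have h1 : (hIter T.phi (cSum S.phi A.c₁ p x) (A.h x),
        A.h (hIter S.phi p x)) ∈ T.Ga := A.xi₁_mem p x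
    have h2 : (hIter T.phi (A.d₁ (hIter S.phi p x) x) (A.h (hIter S.phi p x)),
        A.h x) ∈ T.Ga := A.eta₁_mem _ _ hG
    have h1' := T.ga_shift' (A.d₁ (hIter S.phi p x) x) h1
    rw [← hIter_add'] at h1'
    rw [show A.d₁ (hIter S.phi p x) x + cSum S.phi A.c₁ p x
        = cSum S.phi A.c₁ p x + A.d₁ (hIter S.phi p x) x by ring] at h1'
    exact T.ga_trans' h1' h2
  constructor
  · intro p x _ hG
    exact main p x hG
  · intro p x _ hper
    have hd0 : A.d₁ (hIter S.phi p x) x = 0 := by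
      rw [hper]
      have hrefl : (x, x) ∈ S.Ga := S.ga_refl' x
      have := A.d₁_cocycle x x x hrefl hrefl
      omega
    refine ⟨hd0, ?_⟩
    have := main p x (by rw [hper]; exact S.ga_refl' x)
    rwa [hd0, add_zero] at this
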